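/- arXiv:2507.07771 — 2 statements merged into one kernel-verified Lean document; each statement's English description precedes it below -/
import Mathlib

section
/- Let τ₊, τ₋ > 0 with τ₊ + τ₋ = 1, and let α, β ≥ 0 with α + β = 1 and α τ₋ - β τ₊ ≠ 0. Let p₊, p₋ be densities, p̃(x) = α p₊(x) + β p₋(x), and p(x) = τ₊ p₊(x) + τ₋ p₋(x). Then for any bounded measurable loss ℓ: ℝ × {-1,1} → ℝ and any bounded measurable g, the supervised risk R(g) = τ₊ E_{p₊}[ℓ(g(x),+1)] + τ₋ E_{p₋}[ℓ(g(x),-1)] equals (τ₊τ₋/(ατ₋ - βτ₊)) E_{p̃}[ℓ(g(x),+1) - ℓ(g(x),-1)] + E_p[(ατ₋ ℓ(g(x),-1) - βτ₊ ℓ(g(x),+1))/(ατ₋ - βτ₊)]. -/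
open MeasureTheory

lemma prod_int {d : ℕ} (f : (Fin d → ℝ) → ℝ) (hf : Measurable f) (C : ℝ)
    (hC : ∀ x, |f x| ≤ C) (p : (Fin d → ℝ) → ℝ) (hp : Integrable p) :
    Integrable (fun x => f x * p x) := by
  exact (hp.bdd_mul hf.aestronglyMeasurable (c := C) (Filter.Eventually.of_forall fun x => by
    simpa [Real.norm_eq_abs] using hC x))

/-- Theorem 3, symmetric unbiased risk rewriting.  Labels are encoded as
`Bool` (`true ↦ +1`, `false ↦ -1`).  The supervised risk
`R(g) = τ₊ E_{p₊}[ℓ(g x, +1)] + τ₋ E_{p₋}[ℓ(g x, -1)]` equals the combination of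
expectations over the corrupted marginal `p̃ = α p₊ + β p₋` and the unlabeled
marginal `p = τ₊ p₊ + τ₋ p₋`. -/
theorem stmt4 (d : ℕ) (τp τm : ℝ) (hτp : 0 < τp) (hτm : 0 < τm) (hsum : τp + τm = 1)
    (α β : ℝ) (hα : 0 ≤ α) (hβ : 0 ≤ β) (hαβ : α + β = 1) (hne : α * τm - β * τp ≠ 0)
    (pp pm : (Fin d → ℝ) → ℝ)
    (hppos : ∀ x, 0 ≤ pp x) (hmpos : ∀ x, 0 ≤ pm x)
    (hppint : Integrable pp) (hpmint : Integrable pm)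
    (hpp1 : ∫ x, pp x = 1) (hpm1 : ∫ x, pm x = 1)
    (ℓ : ℝ → Bool → ℝ) (hℓmeas : ∀ b, Measurable (fun z => ℓ z b))
    (Cℓ : ℝ) (hℓbd : ∀ z b, |ℓ z b| ≤ Cℓ)
    (g : (Fin d → ℝ) → ℝ) (hg : Measurable g) (Cg : ℝ) (hgbd : ∀ x, |g x| ≤ Cg) :
    τp * (∫ x, ℓ (g x) true * pp x) + τm * (∫ x, ℓ (g x) false * pm x)
      = (τp * τm / (α * τm - β * τp)) *
          (∫ x, (ℓ (g x) true - ℓ (g x) false) * (α * pp x + β * pm x))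
        + ∫ x, ((α * τm * ℓ (g x) false - β * τp * ℓ (g x) true) / (α * τm - β * τp)) *
            (τp * pp x + τm * pm x) := by
  have hne' : τm * α - τp * β ≠ 0 := by rwa [mul_comm τm, mul_comm τp]
  have hmt : ∀ b, Measurable (fun x => ℓ (g x) b) := fun b => (hℓmeas b).comp hg
  have hbd : ∀ b, ∀ x, |ℓ (g x) b| ≤ Cℓ := fun b x => hℓbd _ _
  have hA : ∀ b, Integrable (fun x => ℓ (g x) b * pp x) := fun b =>
    prod_int _ (hmt b) Cℓ (hbd b) pp hppint
  have hB : ∀ b, Integrable (fun x => ℓ (g x) b * pm x) := fun b =>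
    prod_int _ (hmt b) Cℓ (hbd b) pm hpmint
  set A := ∫ x, ℓ (g x) true * pp x with hAdef
  set B := ∫ x, ℓ (g x) true * pm x with hBdef
  set C := ∫ x, ℓ (g x) false * pp x with hCdef
  set D := ∫ x, ℓ (g x) false * pm x with hDdef
  have h1 : (∫ x, (ℓ (g x) true - ℓ (g x) false) * (α * pp x + β * pm x))
      = α * A - α * C + (β * B - β * D) := by
    have : ∀ x, (ℓ (g x) true - ℓ (g x) false) * (α * pp x + β * pm x)
        = α * (ℓ (g x) true * pp x) - α * (ℓ (g x) false * pp x)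
          + (β * (ℓ (g x) true * pm x) - β * (ℓ (g x) false * pm x)) := by
      intro x; ring
    rw [show (fun x => (ℓ (g x) true - ℓ (g x) false) * (α * pp x + β * pm x))
        = fun x => α * (ℓ (g x) true * pp x) - α * (ℓ (g x) false * pp x)
          + (β * (ℓ (g x) true * pm x) - β * (ℓ (g x) false * pm x)) from funext this]
    have i1 : Integrable (fun x => α * (ℓ (g x) true * pp x) - α * (ℓ (g x) false * pp x)) :=
      ((hA true).const_mul α).sub ((hA false).const_mul α)
    have i2 : Integrable (fun x => β * (ℓ (g x) true * pm x) - β * (ℓ (g x) false * pm x)) :=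
      ((hB true).const_mul β).sub ((hB false).const_mul β)
    rw [integral_add i1 i2,
      integral_sub ((hA true).const_mul α) ((hA false).const_mul α),
      integral_sub ((hB true).const_mul β) ((hB false).const_mul β)]
    simp only [MeasureTheory.integral_const_mul]
    rfl
  have h2 : (∫ x, ((α * τm * ℓ (g x) false - β * τp * ℓ (g x) true) / (α * τm - β * τp)) *
        (τp * pp x + τm * pm x))
      = (α * τm * τp / (α * τm - β * τp)) * C + (α * τm * τm / (α * τm - β * τp)) * D
        - (β * τp * τp / (α * τm - β * τp)) * A - (β * τp * τm / (α * τm - β * τp)) * B := by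
    have : ∀ x, ((α * τm * ℓ (g x) false - β * τp * ℓ (g x) true) / (α * τm - β * τp)) *
        (τp * pp x + τm * pm x)
        = (α * τm * τp / (α * τm - β * τp)) * (ℓ (g x) false * pp x)
          + (α * τm * τm / (α * τm - β * τp)) * (ℓ (g x) false * pm x)
          - (β * τp * τp / (α * τm - β * τp)) * (ℓ (g x) true * pp x)
          - (β * τp * τm / (α * τm - β * τp)) * (ℓ (g x) true * pm x) := by
      intro x; field_simp; ring
    rw [show (fun x => ((α * τm * ℓ (g x) false - β * τp * ℓ (g x) true) / (α * τm - β * τp)) *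
        (τp * pp x + τm * pm x)) = _ from funext this]
    have j1 : Integrable (fun x => α * τm * τp / (α * τm - β * τp) * (ℓ (g x) false * pp x)
        + α * τm * τm / (α * τm - β * τp) * (ℓ (g x) false * pm x)) :=
      ((hA false).const_mul _).add ((hB false).const_mul _)
    have j2 : Integrable (fun x => α * τm * τp / (α * τm - β * τp) * (ℓ (g x) false * pp x)
        + α * τm * τm / (α * τm - β * τp) * (ℓ (g x) false * pm x)
        - β * τp * τp / (α * τm - β * τp) * (ℓ (g x) true * pp x)) :=
      j1.sub ((hA true).const_mul _)
    rw [integral_sub j2 ((hB true).const_mul _), integral_sub j1 ((hA true).const_mul _),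
      integral_add ((hA false).const_mul _) ((hB false).const_mul _)]
    simp only [MeasureTheory.integral_const_mul]
    rfl
  rw [h1, h2]
  field_simp
  ring
end

section
/- Let N ≥ 2, τ₊, τ₋ > 0 with τ₊ + τ₋ = 1. For the mixed-class N-tuple setting with Y_sub = {y ∈ {-1,1}^N : y not all equal}, for every position j the coefficient α_j = (Σ_{y ∈ Y_sub, y_j = +1} Π_k τ_{y_k})/Z equals (Σ_{k=1}^{N-1} C(N-1, k) τ₊^{N-k} τ₋^{k}) / (Σ_{k=1}^{N-1} C(N, N-k) τ₊^{N-k} τ₋^{k}), independent of j. -/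
open Finset

/-- Theorem 6: mixed-class coefficients.  For
`Y_sub = {y ∈ {-1,1}^N : y not all equal}` (labels as `Bool`), for every position `j`,
`α_j = (Σ_{k=1}^{N-1} C(N-1,k) τ₊^{N-k} τ₋^k) / (Σ_{k=1}^{N-1} C(N,N-k) τ₊^{N-k} τ₋^k)`,
independent of `j`. -/
theorem stmt8 (N : ℕ) (hN : 2 ≤ N) (τp τm : ℝ) (hτp : 0 < τp) (hτm : 0 < τm)
    (hsum : τp + τm = 1)
    (τ : Bool → ℝ) (hτ : τ = fun b => if b then τp else τm)
    (Ysub : Finset (Fin N → Bool))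
    (hY : Ysub = univ.filter (fun y => y ≠ (fun _ => true) ∧ y ≠ (fun _ => false)))
    (Z : ℝ) (hZ : Z = ∑ y ∈ Ysub, ∏ k, τ (y k)) :
    ∀ j : Fin N,
      (∑ y ∈ Ysub.filter (fun y => y j = true), ∏ k, τ (y k)) / Z
        = (∑ k ∈ Icc 1 (N - 1), (N - 1).choose k * τp ^ (N - k) * τm ^ k)
          / (∑ k ∈ Icc 1 (N - 1), N.choose (N - k) * τp ^ (N - k) * τm ^ k) := by
  intro j
  have hτt : τ true = τp := by simp [hτ]
  have hτf : τ false = τm := by simp [hτ]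
  have hsum' : τm + τp = 1 := by linarith
  have hNpos : 0 < N := by omega
  set f : (Fin N → Bool) → ℝ := fun y => ∏ k, τ (y k) with hf
  -- total sum over all y equals 1
  have htotal : ∑ y : Fin N → Bool, f y = 1 := by
    have := Finset.prod_univ_sum (fun _ : Fin N => (univ : Finset Bool)) (fun _ b => τ b)
    rw [Fintype.piFinset_univ] at this
    rw [hf, ← this]
    simp only [Fintype.sum_bool, hτt, hτf]
    rw [Finset.prod_const, hsum, one_pow]
  have hfT : f (fun _ => true) = τp ^ N := by simp [hf, hτt]
  have hfF : f (fun _ => false) = τm ^ N := by simp [hf, hτf]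
  -- Z = 1 - τp^N - τm^N
  have hZval : Z = 1 - τp ^ N - τm ^ N := by
    have hsplit : (univ : Finset (Fin N → Bool)) =
        insert (fun _ => true) (insert (fun _ => false) Ysub) := by
      rw [hY]
      ext y
      simp only [mem_insert, mem_filter, mem_univ, true_and, ne_eq]
      tauto
    have hFnot : (fun _ : Fin N => false) ∉ Ysub := by
      rw [hY]; simp
    have hTnot : (fun _ : Fin N => true) ∉ insert (fun _ => false) Ysub := by
      rw [hY]
      simp only [mem_insert, mem_filter, mem_univ, true_and]
      push_neg
      constructor
      · intro h
        have := congrFun h ⟨0, hNpos⟩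
        simp at this
      · intro h; exact absurd rfl h
    rw [hsplit, Finset.sum_insert hTnot, Finset.sum_insert hFnot, hfT, hfF] at htotal
    rw [hZ]
    show Ysub.sum f = _
    linarith
  -- filtered total over all y with y j = true
  have hcond : ∑ y ∈ univ.filter (fun y => y j = true), f y = τp := by
    have hpi : (univ.filter (fun y : Fin N → Bool => y j = true)) =
        Fintype.piFinset (fun i => if i = j then {true} else (univ : Finset Bool)) := by
      ext y
      simp only [mem_filter, mem_univ, true_and, Fintype.mem_piFinset]
      constructor
      · intro h i
        by_cases hi : i = j
        · subst hi; simp [h]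
        · simp [hi]
      · intro h
        have := h j
        simpa using this
    rw [hpi, ← Finset.prod_univ_sum]
    rw [Fintype.prod_eq_mul_prod_compl j]
    have hj : (if j = j then ({true} : Finset Bool) else univ) = {true} := if_pos rfl
    rw [hj, Finset.sum_singleton, hτt]
    have : ∀ i ∈ ({j}ᶜ : Finset (Fin N)), (∑ b ∈ (if i = j then ({true} : Finset Bool) else univ), τ b) = 1 := by
      intro i hi
      rw [Finset.mem_compl, Finset.mem_singleton] at hi
      rw [if_neg hi]
      simp only [Fintype.sum_bool, hτt, hτf]
      linarith
    rw [Finset.prod_congr rfl this, Finset.prod_const_one, mul_one]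
  -- numerator = τp - τp^N
  have hnum : ∑ y ∈ Ysub.filter (fun y => y j = true), f y = τp - τp ^ N := by
    have heq : univ.filter (fun y : Fin N → Bool => y j = true) =
        insert (fun _ => true) (Ysub.filter (fun y => y j = true)) := by
      rw [hY, Finset.filter_filter]
      ext y
      simp only [mem_insert, mem_filter, mem_univ, true_and, ne_eq]
      constructor
      · intro h
        by_cases h1 : y = fun _ => true
        · left; exact h1
        · right
          refine ⟨⟨h1, ?_⟩, h⟩
          intro h2
          rw [h2] at h
          simp at h
      · rintro (h | ⟨_, h⟩)
        · rw [h]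
        · exact h
    have hnotmem : (fun _ : Fin N => true) ∉ Ysub.filter (fun y => y j = true) := by
      rw [hY]
      simp
    rw [heq, Finset.sum_insert hnotmem, hfT] at hcond
    linarith
  -- RHS numerator
  have hrnum : (∑ k ∈ Icc 1 (N - 1), ((N - 1).choose k : ℝ) * τp ^ (N - k) * τm ^ k)
      = τp - τp ^ N := by
    have hb := add_pow τm τp (N - 1)
    have h1 : ∑ k ∈ range N, ((N - 1).choose k : ℝ) * τp ^ (N - k) * τm ^ k = τp := by
      have hc : ∀ k ∈ range N, ((N - 1).choose k : ℝ) * τp ^ (N - k) * τm ^ k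
          = τp * (τm ^ k * τp ^ (N - 1 - k) * (N - 1).choose k) := by
        intro k hk
        rw [Finset.mem_range] at hk
        have : N - k = (N - 1 - k) + 1 := by omega
        rw [this, pow_succ]
        ring
      rw [Finset.sum_congr rfl hc, ← Finset.mul_sum]
      have hrange : range N = range ((N - 1) + 1) := by congr 1; omega
      rw [hrange, ← hb, hsum', one_pow, mul_one]
    have hIcc : Icc 1 (N - 1) = (range N).erase 0 := by
      ext k
      simp only [mem_Icc, mem_erase, mem_range]
      omega
    rw [hIcc, Finset.sum_erase_eq_sub (by simp [hNpos]), h1]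
    simp
  -- RHS denominator
  have hrden : (∑ k ∈ Icc 1 (N - 1), (N.choose (N - k) : ℝ) * τp ^ (N - k) * τm ^ k)
      = 1 - τp ^ N - τm ^ N := by
    have hb := add_pow τm τp N
    rw [hsum', one_pow] at hb
    have h1 : ∑ k ∈ range (N + 1), (N.choose (N - k) : ℝ) * τp ^ (N - k) * τm ^ k = 1 := by
      have hc : ∀ k ∈ range (N + 1), (N.choose (N - k) : ℝ) * τp ^ (N - k) * τm ^ k
          = τm ^ k * τp ^ (N - k) * N.choose k := by
        intro k hk
        rw [Finset.mem_range] at hk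
        rw [Nat.choose_symm (by omega)]
        ring
      rw [Finset.sum_congr rfl hc, ← hb]
    have hIcc : Icc 1 (N - 1) = ((range (N + 1)).erase 0).erase N := by
      ext k
      simp only [mem_Icc, mem_erase, mem_range]
      omega
    have hN0 : N ∈ (range (N + 1)).erase 0 := by
      simp only [mem_erase, mem_range]
      omega
    rw [hIcc, Finset.sum_erase_eq_sub hN0,
      Finset.sum_erase_eq_sub (by simp), h1]
    have e1 : (N.choose (N - N) : ℝ) * τp ^ (N - N) * τm ^ N = τm ^ N := by
      simp
    have e2 : (N.choose (N - 0) : ℝ) * τp ^ (N - 0) * τm ^ 0 = τp ^ N := by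
      simp
    rw [e1, e2]
  rw [hrnum, hrden, hZval]
  show (Ysub.filter (fun y => y j = true)).sum f / _ = _
  rw [hnum]
end
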